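/- In the setting of a family U satisfying (u₁) and (u₂), if f_n → f_0 in the C^k topology then ∫ |log |det DF_n| − log |det DF_0|| dm → 0; that is, log |det DF_f| varies continuously in L^1(m) with f ∈ U. -/

import Mathlib

open MeasureTheory Filter Topology Set ENNReal

lemma comp_unif {α β γ : Type*} [MetricSpace β] [MetricSpace γ]
    {F : ℕ → β → γ} {F0 : β → γ} {G : ℕ → α → β} {G0 : α → β}
    (hF : TendstoUniformly F F0 atTop) (hF0 : UniformContinuous F0)
    (hG : TendstoUniformly G G0 atTop) :
    TendstoUniformly (fun n x => F n (G n x)) (fun x => F0 (G0 x)) atTop := by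
  rw [Metric.tendstoUniformly_iff]
  intro ε hε
  obtain ⟨δ, hδ, hδ'⟩ := Metric.uniformContinuous_iff.1 hF0 (ε/2) (by positivity)
  filter_upwards [Metric.tendstoUniformly_iff.1 hF (ε/2) (by positivity),
    Metric.tendstoUniformly_iff.1 hG δ hδ] with n hFn hGn x
  have h1 : dist (F0 (G0 x)) (F0 (G n x)) < ε/2 := hδ' (hGn x)
  have h2 : dist (F0 (G n x)) (F n (G n x)) < ε/2 := hFn _
  calc dist (F0 (G0 x)) ((fun n x => F n (G n x)) n x)
      ≤ dist (F0 (G0 x)) (F0 (G n x)) + dist (F0 (G n x)) (F n (G n x)) := dist_triangle _ _ _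
    _ < ε := by linarith

lemma meas_comp_nat {X : Type*} [MeasurableSpace X] {F : ℕ → X → ℝ}
    (hF : ∀ k, Measurable (F k)) {τ : X → ℕ} (hτ : Measurable τ) :
    Measurable fun x => F (τ x) x := by
  have h : Measurable fun p : X × ℕ => F p.2 p.1 :=
    measurable_from_prod_countable_left fun k => hF k
  exact h.comp (measurable_id.prodMk hτ)

lemma log_sub_le {a b c : ℝ} (hc : 0 < c) (ha : c ≤ a) (hb : c ≤ b) (h : b ≤ a) :
    Real.log a - Real.log b ≤ (a - b) / c := by
  have hb0 : 0 < b := hc.trans_le hb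
  have ha0 : 0 < a := hc.trans_le ha
  have h1 : Real.log (a / b) ≤ a / b - 1 := Real.log_le_sub_one_of_pos (div_pos ha0 hb0)
  rw [Real.log_div ha0.ne' hb0.ne'] at h1
  have h2 : a / b - 1 = (a - b) / b := by field_simp
  have h3 : (a - b) / b ≤ (a - b) / c :=
    div_le_div_of_nonneg_left (by linarith) hc hb
  linarith [h2 ▸ h1]

lemma log_abs_sub_le {a b c : ℝ} (hc : 0 < c) (ha : c ≤ a) (hb : c ≤ b) :
    |Real.log a - Real.log b| ≤ |a - b| / c := by
  rcases le_total b a with h | h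
  · rw [abs_of_nonneg (by linarith : (0:ℝ) ≤ a - b)]
    rw [abs_of_nonneg (sub_nonneg.2 (Real.log_le_log (hc.trans_le hb) h))]
    exact log_sub_le hc ha hb h
  · rw [abs_sub_comm, abs_sub_comm a b]
    rw [abs_of_nonneg (by linarith : (0:ℝ) ≤ b - a)]
    rw [abs_of_nonneg (sub_nonneg.2 (Real.log_le_log (hc.trans_le ha) h))]
    exact log_sub_le hc hb ha h

lemma nat_ne_abs {a b : ℕ} (h : a ≠ b) : (1:ℝ) ≤ |(a:ℝ) - b| := by
  have h1 : (1:ℤ) ≤ |(a:ℤ) - b| := Int.one_le_abs (sub_ne_zero.2 (by exact_mod_cast h))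
  have h2 : ((|(a:ℤ) - b| : ℤ) : ℝ) = |(a:ℝ) - b| := by push_cast; rfl
  rw [← h2]; exact_mod_cast h1

/-- In the setting of a family satisfying (u₁) and (u₂), if `f n → f 0` in
the `C^k` topology then `∫ |log |det DF_n| − log |det DF_0|| dm → 0`; i.e., the Jacobian
logarithms of the induced maps vary continuously in `L¹(m)`.  Here `JF n` denotes
`|det DF_n|`, given by the chain rule as a product of `Jf n = |det Df_n|` along the
return time `τ n`. -/
theorem stmt_16 {X : Type*} [MeasurableSpace X] [MetricSpace X] [CompactSpace X]
    [BorelSpace X]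
    (m : Measure X) [IsProbabilityMeasure m]
    (f : ℕ → X → X) (hfcont : ∀ n, Continuous (f n))
    (Jf : ℕ → X → ℝ) (hJfcont : ∀ n, Continuous (Jf n))
    -- `C^k` convergence `f n → f 0`: the maps and their Jacobians converge uniformly
    (hfconv : TendstoUniformly (fun n => f n) (f 0) atTop)
    (hJfconv : TendstoUniformly (fun n => Jf n) (Jf 0) atTop)
    -- uniform bound on the Jacobians over the family (compactness of `M`)
    (K : ℝ) (hK : 1 < K) (hJfK : ∀ n x, 0 < Jf n x ∧ Jf n x ≤ K)
    (τ : ℕ → X → ℕ) (hτmeas : ∀ n, Measurable (τ n)) (hτpos : ∀ n x, 1 ≤ τ n x)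
    -- (u₁): τ n → τ 0 in L¹(m)
    (hτint : ∀ n, Integrable (fun x => (τ n x : ℝ)) m)
    (hτL1 : Tendsto (fun n => ∫ x, |(τ n x : ℝ) - (τ 0 x : ℝ)| ∂m) atTop (𝓝 0))
    -- `JF n = |det DF_n|`, via the chain rule along the return time
    (JF : ℕ → X → ℝ)
    (hJF : ∀ n x, JF n x = ∏ j ∈ Finset.range (τ n x), Jf n ((f n)^[j] x))
    -- (i₂) expansion gives `|det DF_n| ≥ 1`
    (hJF1 : ∀ n x, 1 ≤ JF n x) :
    Tendsto (fun n => ∫ x, |Real.log (JF n x) - Real.log (JF 0 x)| ∂m) atTop (𝓝 0) := by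
  haveI : Nonempty X := by
    by_contra hX
    rw [not_nonempty_iff] at hX
    have h1 : m univ = 1 := measure_univ
    rw [Set.univ_eq_empty_iff.2 hX, measure_empty] at h1
    exact zero_ne_one h1
  have hL : 0 < Real.log K := Real.log_pos hK
  -- uniform continuity of the limits
  have hucf : UniformContinuous (f 0) := CompactSpace.uniformContinuous_of_continuous (hfcont 0)
  have hucJ : UniformContinuous (Jf 0) := CompactSpace.uniformContinuous_of_continuous (hJfcont 0)
  -- uniform lower bound for `Jf 0`
  obtain ⟨x0, -, hx0⟩ := isCompact_univ.exists_isMinOn univ_nonempty ((hJfcont 0).continuousOn)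
  have hδ : 0 < Jf 0 x0 := (hJfK 0 x0).1
  set δ := Jf 0 x0 with hδdef
  have hδle : ∀ y : X, δ ≤ Jf 0 y := fun y => hx0 (mem_univ y)
  -- uniform convergence of iterates
  have hiter : ∀ j, TendstoUniformly (fun n x => (f n)^[j] x) (fun x => (f 0)^[j] x) atTop := by
    intro j
    induction j with
    | zero =>
      simp only [Function.iterate_zero, id_eq]
      rw [Metric.tendstoUniformly_iff]
      intro ε hε
      filter_upwards with n x
      simpa using hε
    | succ j ih =>
      simp only [Function.iterate_succ_apply']
      exact comp_unif hfconv hucf ih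
  have hJcomp : ∀ j, TendstoUniformly (fun n x => Jf n ((f n)^[j] x))
      (fun x => Jf 0 ((f 0)^[j] x)) atTop := fun j => comp_unif hJfconv hucJ (hiter j)
  -- uniform convergence of the logs
  have hlog : ∀ j, TendstoUniformly (fun n x => Real.log (Jf n ((f n)^[j] x)))
      (fun x => Real.log (Jf 0 ((f 0)^[j] x))) atTop := by
    intro j
    rw [Metric.tendstoUniformly_iff]
    intro ε hε
    filter_upwards [Metric.tendstoUniformly_iff.1 (hJcomp j) (min (δ/2) (ε * (δ/2)))
      (lt_min (by positivity) (by positivity))] with n hn x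
    have h1 := hn x
    rw [Real.dist_eq] at h1 ⊢
    have h2 : |Jf 0 ((f 0)^[j] x) - Jf n ((f n)^[j] x)| < δ/2 := h1.trans_le (min_le_left _ _)
    have h3 : |Jf 0 ((f 0)^[j] x) - Jf n ((f n)^[j] x)| < ε * (δ/2) := h1.trans_le (min_le_right _ _)
    have h4 : δ ≤ Jf 0 ((f 0)^[j] x) := hδle _
    have h5 : δ/2 ≤ Jf n ((f n)^[j] x) := by
      have := abs_lt.1 h2
      linarith [this.1, this.2]
    have ha' : δ/2 ≤ Jf 0 ((f 0)^[j] x) := by linarith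
    have h6 := log_abs_sub_le (by positivity : (0:ℝ) < δ/2) ha' h5
    calc |Real.log (Jf 0 ((f 0)^[j] x)) - Real.log (Jf n ((f n)^[j] x))|
        ≤ |Jf 0 ((f 0)^[j] x) - Jf n ((f n)^[j] x)| / (δ/2) := h6
      _ < (ε * (δ/2)) / (δ/2) := (div_lt_div_iff_of_pos_right (by positivity)).2 h3
      _ = ε := by field_simp
  -- bounds on log JF
  have hJFpos : ∀ n x, (0:ℝ) < JF n x := fun n x => lt_of_lt_of_le one_pos (hJF1 n x)
  have hlogJF : ∀ n x, 0 ≤ Real.log (JF n x) ∧ Real.log (JF n x) ≤ Real.log K * τ n x := by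
    intro n x
    refine ⟨Real.log_nonneg (hJF1 n x), ?_⟩
    have h1 : JF n x ≤ K ^ (τ n x) := by
      rw [hJF]
      calc ∏ j ∈ Finset.range (τ n x), Jf n ((f n)^[j] x)
          ≤ ∏ _j ∈ Finset.range (τ n x), K :=
            Finset.prod_le_prod (fun j _ => (hJfK n _).1.le) (fun j _ => (hJfK n _).2)
        _ = K ^ (τ n x) := by rw [Finset.prod_const, Finset.card_range]
    have h2 := Real.log_le_log (hJFpos n x) h1
    rw [Real.log_pow] at h2
    rw [mul_comm]
    exact h2
  -- measurability and integrability
  have hJFmeas : ∀ n, Measurable (JF n) := by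
    intro n
    have h1 : ∀ k, Measurable fun x => ∏ j ∈ Finset.range k, Jf n ((f n)^[j] x) := by
      intro k
      have : Continuous fun x => ∏ j ∈ Finset.range k, Jf n ((f n)^[j] x) :=
        continuous_finset_prod _ (fun j _ => (hJfcont n).comp ((hfcont n).iterate j))
      exact this.measurable
    have h2 : Measurable fun x => ∏ j ∈ Finset.range (τ n x), Jf n ((f n)^[j] x) :=
      meas_comp_nat h1 (hτmeas n)
    have h3 : JF n = fun x => ∏ j ∈ Finset.range (τ n x), Jf n ((f n)^[j] x) := funext (hJF n)
    rw [h3]; exact h2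
  have hgint : ∀ n, Integrable (fun x => |Real.log (JF n x) - Real.log (JF 0 x)|) m := by
    intro n
    have hb : Integrable (fun x => Real.log K * ((τ n x : ℝ) + (τ 0 x : ℝ))) m :=
      ((hτint n).add (hτint 0)).const_mul _
    apply Integrable.mono' hb
    · exact (((Real.measurable_log.comp (hJFmeas n)).sub
        (Real.measurable_log.comp (hJFmeas 0))).abs).aestronglyMeasurable
    · filter_upwards with x
      rw [Real.norm_eq_abs, abs_abs, abs_sub_le_iff]
      have h1 := hlogJF n x
      have h2 := hlogJF 0 x
      constructor
      · nlinarith [h1.2, h2.1, mul_nonneg hL.le (Nat.cast_nonneg (τ 0 x))]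
      · nlinarith [h2.2, h1.1, mul_nonneg hL.le (Nat.cast_nonneg (τ n x))]
  -- truncation integrals tend to zero
  have hCmeas : ∀ N : ℕ, MeasurableSet {y | N < τ 0 y} := fun N => (hτmeas 0) measurableSet_Ioi
  have hIint : ∀ N : ℕ, Integrable (({y | N < τ 0 y}).indicator (fun y => (τ 0 y : ℝ))) m :=
    fun N => (hτint 0).indicator (hCmeas N)
  have hI : Tendsto (fun N : ℕ => ∫ x, ({y | N < τ 0 y}).indicator (fun y => (τ 0 y:ℝ)) x ∂m)
      atTop (𝓝 0) := by
    have h0 : (0:ℝ) = ∫ _x, (0:ℝ) ∂m := (integral_zero _ _).symm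
    rw [h0]
    apply tendsto_integral_of_dominated_convergence (fun x => (τ 0 x : ℝ))
    · intro N; exact (hIint N).1
    · exact hτint 0
    · intro N
      filter_upwards with x
      rw [Real.norm_eq_abs, abs_of_nonneg (Set.indicator_nonneg (fun y _ => Nat.cast_nonneg _) x)]
      exact Set.indicator_le_self' (fun y _ => Nat.cast_nonneg _) x
    · filter_upwards with x
      have hev : ∀ᶠ N in atTop,
          ({y | N < τ 0 y}).indicator (fun y => (τ 0 y:ℝ)) x = (0:ℝ) := by
        filter_upwards [eventually_ge_atTop (τ 0 x)] with N hN
        exact Set.indicator_of_notMem (by simpa using hN) _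
      exact Tendsto.congr' (EventuallyEq.symm hev) tendsto_const_nhds
  -- the main estimate
  rw [NormedAddCommGroup.tendsto_nhds_zero]
  intro ε hε
  set ε' := ε / (2 * (1 + 3 * Real.log K)) with hε'def
  have hε' : 0 < ε' := div_pos hε (by nlinarith)
  obtain ⟨N, hN⟩ := (hI.eventually (gt_mem_nhds hε')).exists
  have hτsmall : ∀ᶠ n in atTop, ∫ x, |(τ n x:ℝ) - (τ 0 x:ℝ)| ∂m < ε' / (2*(N:ℝ) + 1) :=
    hτL1.eventually (gt_mem_nhds (div_pos hε' (by positivity)))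
  have hgood : ∀ᶠ n in atTop, ∀ x, τ n x = τ 0 x → τ 0 x ≤ N →
      |Real.log (JF n x) - Real.log (JF 0 x)| ≤ ε' := by
    have H : ∀ᶠ n in atTop, ∀ j ∈ Finset.range N, ∀ x,
        dist (Real.log (Jf 0 ((f 0)^[j] x))) (Real.log (Jf n ((f n)^[j] x))) < ε' / ((N:ℝ) + 1) := by
      rw [eventually_all_finset]
      intro j _
      exact Metric.tendstoUniformly_iff.1 (hlog j) _ (div_pos hε' (by positivity))
    filter_upwards [H] with n hn x ht htN
    have e1 : Real.log (JF n x) = ∑ j ∈ Finset.range (τ n x), Real.log (Jf n ((f n)^[j] x)) := by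
      rw [hJF]
      exact Real.log_prod (fun j _ => (hJfK n _).1.ne')
    have e0 : Real.log (JF 0 x) = ∑ j ∈ Finset.range (τ 0 x), Real.log (Jf 0 ((f 0)^[j] x)) := by
      rw [hJF]
      exact Real.log_prod (fun j _ => (hJfK 0 _).1.ne')
    rw [e1, e0, ht, ← Finset.sum_sub_distrib]
    calc |∑ j ∈ Finset.range (τ 0 x),
          (Real.log (Jf n ((f n)^[j] x)) - Real.log (Jf 0 ((f 0)^[j] x)))|
        ≤ ∑ j ∈ Finset.range (τ 0 x),
            |Real.log (Jf n ((f n)^[j] x)) - Real.log (Jf 0 ((f 0)^[j] x))| :=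
          Finset.abs_sum_le_sum_abs _ _
      _ ≤ ∑ _j ∈ Finset.range (τ 0 x), ε' / ((N:ℝ) + 1) := by
          apply Finset.sum_le_sum
          intro j hj
          have hjN : j ∈ Finset.range N := Finset.mem_range.2 ((Finset.mem_range.1 hj).trans_le htN)
          have h := hn j hjN x
          rw [Real.dist_eq, abs_sub_comm] at h
          exact h.le
      _ = (τ 0 x : ℝ) * (ε' / ((N:ℝ) + 1)) := by
          rw [Finset.sum_const, Finset.card_range, nsmul_eq_mul]
      _ ≤ ε' := by
          have h1 : ((τ 0 x : ℝ)) ≤ (N:ℝ) + 1 := by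
            have : (τ 0 x : ℝ) ≤ (N:ℝ) := by exact_mod_cast htN
            linarith
          have h2 : (0:ℝ) < (N:ℝ) + 1 := by positivity
          calc (τ 0 x : ℝ) * (ε' / ((N:ℝ)+1)) ≤ ((N:ℝ)+1) * (ε' / ((N:ℝ)+1)) :=
                mul_le_mul_of_nonneg_right h1 (div_pos hε' h2).le
            _ = ε' := by field_simp
  filter_upwards [hτsmall, hgood] with n h1 h2
  set C := {y | N < τ 0 y} with hCdef
  have hind_nonneg : ∀ x, 0 ≤ C.indicator (fun y => (τ 0 y:ℝ)) x :=
    fun x => Set.indicator_nonneg (fun y _ => Nat.cast_nonneg _) x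
  -- the dominating function
  set h := fun x => ε' + Real.log K * ((2*(N:ℝ)+1) * |(τ n x:ℝ) - (τ 0 x:ℝ)|
      + 2 * C.indicator (fun y => (τ 0 y:ℝ)) x) with hhdef
  have hint1 : Integrable (fun x => (2*(N:ℝ)+1) * |(τ n x:ℝ) - (τ 0 x:ℝ)|) m :=
    (((hτint n).sub (hτint 0)).abs).const_mul _
  have hint2 : Integrable (fun x => 2 * C.indicator (fun y => (τ 0 y:ℝ)) x) m :=
    ((hτint 0).indicator (hCmeas N)).const_mul _
  have hadd : Integrable (fun x => (2*(N:ℝ)+1) * |(τ n x:ℝ) - (τ 0 x:ℝ)|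
      + 2 * C.indicator (fun y => (τ 0 y:ℝ)) x) m := hint1.add hint2
  have hws : Integrable (fun x => Real.log K * ((2*(N:ℝ)+1) * |(τ n x:ℝ) - (τ 0 x:ℝ)|
      + 2 * C.indicator (fun y => (τ 0 y:ℝ)) x)) m := hadd.const_mul _
  have hhint : Integrable h m := by
    rw [hhdef]
    exact (integrable_const _).add hws
  have hpt : ∀ x, |Real.log (JF n x) - Real.log (JF 0 x)| ≤ h x := by
    intro x
    by_cases hA : τ n x = τ 0 x ∧ τ 0 x ≤ N
    · have hg := h2 x hA.1 hA.2
      have hr : 0 ≤ Real.log K * ((2*(N:ℝ)+1) * |(τ n x:ℝ) - (τ 0 x:ℝ)|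
          + 2 * C.indicator (fun y => (τ 0 y:ℝ)) x) := by
        apply mul_nonneg hL.le
        have ha := abs_nonneg ((τ n x:ℝ) - (τ 0 x:ℝ))
        have hb := hind_nonneg x
        have hc : (0:ℝ) ≤ 2*(N:ℝ)+1 := by positivity
        nlinarith
      simp only [hhdef]
      linarith
    · have hbase : |Real.log (JF n x) - Real.log (JF 0 x)|
          ≤ Real.log K * ((τ n x:ℝ) + (τ 0 x:ℝ)) := by
        have b1 := hlogJF n x
        have b0 := hlogJF 0 x
        rw [abs_sub_le_iff]
        constructor
        · nlinarith [b1.2, b0.1, mul_nonneg hL.le (Nat.cast_nonneg (τ 0 x))]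
        · nlinarith [b0.2, b1.1, mul_nonneg hL.le (Nat.cast_nonneg (τ n x))]
      have habs := le_abs_self ((τ n x:ℝ) - (τ 0 x:ℝ))
      have hanon := abs_nonneg ((τ n x:ℝ) - (τ 0 x:ℝ))
      have key : (τ n x:ℝ) + (τ 0 x:ℝ) ≤ (2*(N:ℝ)+1) * |(τ n x:ℝ) - (τ 0 x:ℝ)|
          + 2 * C.indicator (fun y => (τ 0 y:ℝ)) x := by
        by_cases hle : τ 0 x ≤ N
        · have hne : τ n x ≠ τ 0 x := fun hc => hA ⟨hc, hle⟩
          have hd1 : (1:ℝ) ≤ |(τ n x:ℝ) - (τ 0 x:ℝ)| := nat_ne_abs hne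
          have hτ0N : (τ 0 x:ℝ) ≤ (N:ℝ) := by exact_mod_cast hle
          have h3 : (τ 0 x:ℝ) ≤ (N:ℝ) * |(τ n x:ℝ) - (τ 0 x:ℝ)| := by
            nlinarith [(Nat.cast_nonneg N : (0:ℝ) ≤ (N:ℝ))]
          have h4 := hind_nonneg x
          linarith
        · have hmem : x ∈ C := by
            simp only [hCdef, Set.mem_setOf_eq]
            omega
          rw [Set.indicator_of_mem hmem]
          have h5 : (0:ℝ) ≤ 2*(N:ℝ) * |(τ n x:ℝ) - (τ 0 x:ℝ)| := by positivity
          linarith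
      have hmul := mul_le_mul_of_nonneg_left key hL.le
      simp only [hhdef]
      linarith
  have heq : ∫ x, h x ∂m = ε' + Real.log K * ((2*(N:ℝ)+1) * (∫ x, |(τ n x:ℝ) - (τ 0 x:ℝ)| ∂m)
      + 2 * ∫ x, C.indicator (fun y => (τ 0 y:ℝ)) x ∂m) := by
    simp only [hhdef]
    rw [integral_add (integrable_const _) hws,
      integral_const_mul, integral_add hint1 hint2, integral_const_mul, integral_const_mul,
      integral_const]
    simp [measure_univ]
  have hIpos : 0 ≤ ∫ x, C.indicator (fun y => (τ 0 y:ℝ)) x ∂m :=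
    integral_nonneg hind_nonneg
  rw [Real.norm_eq_abs, abs_of_nonneg (integral_nonneg (fun x => abs_nonneg _))]
  calc ∫ x, |Real.log (JF n x) - Real.log (JF 0 x)| ∂m
      ≤ ∫ x, h x ∂m := integral_mono (hgint n) hhint hpt
    _ < ε := by
        rw [heq]
        have hA1 : (2*(N:ℝ)+1) * (∫ x, |(τ n x:ℝ) - (τ 0 x:ℝ)| ∂m) < ε' := by
          have hp : (0:ℝ) < 2*(N:ℝ)+1 := by positivity
          calc (2*(N:ℝ)+1) * (∫ x, |(τ n x:ℝ) - (τ 0 x:ℝ)| ∂m)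
              < (2*(N:ℝ)+1) * (ε' / (2*(N:ℝ) + 1)) := by
                exact mul_lt_mul_of_pos_left h1 hp
            _ = ε' := by field_simp
        have hA2 : ∫ x, C.indicator (fun y => (τ 0 y:ℝ)) x ∂m < ε' := hN
        have hsum : (2*(N:ℝ)+1) * (∫ x, |(τ n x:ℝ) - (τ 0 x:ℝ)| ∂m)
            + 2 * ∫ x, C.indicator (fun y => (τ 0 y:ℝ)) x ∂m < 3 * ε' := by linarith
        have hmul := mul_lt_mul_of_pos_left hsum hL
        have hval : ε' * (1 + 3 * Real.log K) = ε / 2 := by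
          rw [hε'def]
          field_simp
        nlinarith [hmul, hval, hε]
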